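/- Suppose 𝒬 allows for Dirac measures, D(Q,Π) ≤ M for all Q ∈ 𝒬, and the losses (L_n) are measurable, bounded below, lower semicontinuous and coercive with L_n → L pointwise, L lower semicontinuous, inf_Θ L ≥ limsup_n inf_Θ L_n > −∞. For each n let Q_n minimise T_n(Q) = n·J_{L_n}(Q) + (1/β)·D(Q,Π) over 𝒬. Let (ε_n) be a positive sequence with ε_n → 0 and n·ε_n → ∞, and set N_{ε_n} := {θ ∈ Θ : L(θ) ≤ inf_Θ L + ε_n}. If there exist k > 0 and N such that inf_{N_{ε_n}^c} L_n − inf_Θ L_n ≥ k·ε_n for all n ≥ N, then Q_n(N_{ε_n}) → 1 as n → ∞. -/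

import Mathlib

open MeasureTheory Filter Topology
open scoped ENNReal NNReal

/-- The loss functional `J_f(ν) := ∫ f dν`, valued in the extended reals; for `f`
bounded below it takes values in `(-∞, ∞]`. -/
noncomputable def J {Θ : Type*} [MeasurableSpace Θ] (f : Θ → ℝ) (ν : Measure Θ) : EReal :=
  ((∫⁻ θ, ENNReal.ofReal (f θ) ∂ν : ℝ≥0∞) : EReal) -
    ((∫⁻ θ, ENNReal.ofReal (-f θ) ∂ν : ℝ≥0∞) : EReal)

/-- The GVI objective `T n β L D Π Q := n · J_L(Q) + (1/β) · D(Q, Π)`. -/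
noncomputable def T {Θ : Type*} [MeasurableSpace Θ] (n : ℕ) (β : ℝ) (L : Θ → ℝ)
    (D : ProbabilityMeasure Θ → ProbabilityMeasure Θ → ℝ)
    (prior Q : ProbabilityMeasure Θ) : EReal :=
  ((n : ℝ) : EReal) * J L (Q : Measure Θ) + ((1 / β * D Q prior : ℝ) : EReal)

/-- `f : Θ → ℝ` is coercive if for every `c` there is a compact set outside of which `f > c`. -/
def Coercive {Θ : Type*} [TopologicalSpace Θ] (f : Θ → ℝ) : Prop :=
  ∀ c : ℝ, ∃ K : Set Θ, IsCompact K ∧ ∀ θ ∉ K, c < f θ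

/-- The mixture `a·μ + (1−a)·ν` of two probability measures. -/
noncomputable def mix {Θ : Type*} [MeasurableSpace Θ] (μ ν : ProbabilityMeasure Θ) (a : ℝ)
    (ha0 : 0 ≤ a) (ha1 : a ≤ 1) : ProbabilityMeasure Θ :=
  ⟨ENNReal.ofReal a • (μ : Measure Θ) + ENNReal.ofReal (1 - a) • (ν : Measure Θ), by
    constructor
    simp only [Measure.coe_add, Pi.add_apply, Measure.smul_apply, smul_eq_mul, measure_univ,
      mul_one]
    rw [← ENNReal.ofReal_add ha0 (by linarith)]
    norm_num⟩

/-- The Dirac probability measure at `θ`. -/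
noncomputable def diracProb {Θ : Type*} [MeasurableSpace Θ] (θ : Θ) : ProbabilityMeasure Θ :=
  ⟨Measure.dirac θ, inferInstance⟩

/-- `𝒬` allows for Dirac measures: it is weak*-closed and the infimum of `J_f` over `𝒬`
equals the infimum of `f` over `Θ`, for every bounded below, lsc, coercive `f`. -/
def AllowsDiracs {Θ : Type*} [MeasurableSpace Θ] [TopologicalSpace Θ] [OpensMeasurableSpace Θ]
    (𝒬 : Set (ProbabilityMeasure Θ)) : Prop :=
  IsClosed 𝒬 ∧ ∀ f : Θ → ℝ, (∃ b, ∀ θ, b ≤ f θ) → LowerSemicontinuous f → Coercive f →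
    (⨅ ν : 𝒬, J f (ν.1 : Measure Θ)) = ((⨅ θ, f θ : ℝ) : EReal)

lemma J_ge_integral {Θ : Type*} [MeasurableSpace Θ] (f g : Θ → ℝ) (μ : Measure Θ)
    (hg : Integrable g μ) (hle : ∀ θ, g θ ≤ f θ) :
    ((∫ θ, g θ ∂μ : ℝ) : EReal) ≤ J f μ := by
  have key : ∀ x : ℝ, ENNReal.ofReal x ≤ (‖x‖₊ : ℝ≥0∞) := by
    intro x
    rw [← enorm_eq_nnnorm, ← ofReal_norm, Real.norm_eq_abs]
    exact ENNReal.ofReal_le_ofReal (le_abs_self x)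
  have hA' : ∫⁻ θ, ENNReal.ofReal (g θ) ∂μ ≠ ∞ :=
    (lt_of_le_of_lt (lintegral_mono fun θ => key (g θ)) hg.hasFiniteIntegral).ne
  have hB' : ∫⁻ θ, ENNReal.ofReal (-g θ) ∂μ ≠ ∞ :=
    (lt_of_le_of_lt (lintegral_mono fun θ => by have h := key (-(g θ)); rw [nnnorm_neg] at h; exact h)
      hg.hasFiniteIntegral).ne
  have hA : ∫⁻ θ, ENNReal.ofReal (g θ) ∂μ ≤ ∫⁻ θ, ENNReal.ofReal (f θ) ∂μ :=
    lintegral_mono fun θ => ENNReal.ofReal_le_ofReal (hle θ)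
  have hB : ∫⁻ θ, ENNReal.ofReal (-f θ) ∂μ ≤ ∫⁻ θ, ENNReal.ofReal (-g θ) ∂μ :=
    lintegral_mono fun θ => ENNReal.ofReal_le_ofReal (by linarith [hle θ])
  rw [integral_eq_lintegral_pos_part_sub_lintegral_neg_part hg]
  have e1 : (((∫⁻ θ, ENNReal.ofReal (g θ) ∂μ).toReal : ℝ) : EReal) =
      ((∫⁻ θ, ENNReal.ofReal (g θ) ∂μ : ℝ≥0∞) : EReal) := by
    rw [← EReal.toReal_coe_ennreal]
    exact EReal.coe_toReal (by simpa [EReal.coe_ennreal_eq_top_iff] using hA') (by simp)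
  have e2 : (((∫⁻ θ, ENNReal.ofReal (-g θ) ∂μ).toReal : ℝ) : EReal) =
      ((∫⁻ θ, ENNReal.ofReal (-g θ) ∂μ : ℝ≥0∞) : EReal) := by
    rw [← EReal.toReal_coe_ennreal]
    exact EReal.coe_toReal (by simpa [EReal.coe_ennreal_eq_top_iff] using hB') (by simp)
  calc (((∫⁻ θ, ENNReal.ofReal (g θ) ∂μ).toReal -
        (∫⁻ θ, ENNReal.ofReal (-g θ) ∂μ).toReal : ℝ) : EReal)
      = ((∫⁻ θ, ENNReal.ofReal (g θ) ∂μ : ℝ≥0∞) : EReal) -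
        ((∫⁻ θ, ENNReal.ofReal (-g θ) ∂μ : ℝ≥0∞) : EReal) := by
        rw [EReal.coe_sub, e1, e2]
    _ ≤ J f μ :=
        EReal.sub_le_sub (EReal.coe_ennreal_le_coe_ennreal_iff.2 hA)
          (EReal.coe_ennreal_le_coe_ennreal_iff.2 hB)

/-- Theorem: rates of convergence: With `𝒬` allowing Dirac measures, a bounded
divergence, and a positive sequence `ε_n → 0` with `n·ε_n → ∞`, if eventually
`inf_{N_{ε_n}^c} L_n − inf_Θ L_n ≥ k·ε_n`, then `Q_n(N_{ε_n}) → 1`. -/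
theorem gvi_rates_of_convergence {Θ : Type*} [TopologicalSpace Θ] [PolishSpace Θ]
    [MeasurableSpace Θ] [BorelSpace Θ] [Nonempty Θ]
    (𝒬 : Set (ProbabilityMeasure Θ)) (h𝒬 : AllowsDiracs 𝒬)
    (L : ℕ → Θ → ℝ) (Llim : Θ → ℝ)
    (hmeas : ∀ n, Measurable (L n)) (hbdd : ∀ n, ∃ b : ℝ, ∀ θ, b ≤ L n θ)
    (hlsc : ∀ n, LowerSemicontinuous (L n)) (hcoer : ∀ n, Coercive (L n))
    (hLlimlsc : LowerSemicontinuous Llim)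
    (hconv : ∀ θ : Θ, Tendsto (fun n => L n θ) atTop (nhds (Llim θ)))
    (hinf1 : Filter.limsup (fun n => ((⨅ θ : Θ, L n θ : ℝ) : EReal)) atTop ≤
      ((⨅ θ : Θ, Llim θ : ℝ) : EReal))
    (hinf2 : (⊥ : EReal) < Filter.limsup (fun n => ((⨅ θ : Θ, L n θ : ℝ) : EReal)) atTop)
    (D : ProbabilityMeasure Θ → ProbabilityMeasure Θ → ℝ)
    (hDnn : ∀ P Q : ProbabilityMeasure Θ, 0 ≤ D P Q)
    (Pr : ProbabilityMeasure Θ) (M β : ℝ) (hM : 0 < M) (hβ : 0 < β)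
    (hDbdd : ∀ Q ∈ 𝒬, D Q Pr ≤ M)
    (Qn : ℕ → ProbabilityMeasure Θ)
    (hQn : ∀ n, Qn n ∈ 𝒬 ∧ ∀ Q ∈ 𝒬, T n β (L n) D Pr (Qn n) ≤ T n β (L n) D Pr Q)
    (ε : ℕ → ℝ) (hεpos : ∀ n, 0 < ε n) (hε0 : Tendsto ε atTop (nhds 0))
    (hnε : Tendsto (fun n : ℕ => (n : ℝ) * ε n) atTop atTop)
    (hgap : ∃ k : ℝ, 0 < k ∧ ∃ N : ℕ, ∀ n ≥ N,
      k * ε n ≤ (⨅ θ : ({θ : Θ | Llim θ ≤ (⨅ θ' : Θ, Llim θ') + ε n}ᶜ : Set Θ), L n (θ : Θ)) -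
        ⨅ θ : Θ, L n θ) :
    Tendsto (fun n => ((Qn n) {θ : Θ | Llim θ ≤ (⨅ θ' : Θ, Llim θ') + ε n} : ℝ)) atTop
      (nhds 1) := by
  obtain ⟨k, hk, N, hgapN⟩ := hgap
  obtain ⟨-, hdirac⟩ := h𝒬
  have hAmeas : ∀ n, MeasurableSet {θ : Θ | Llim θ ≤ (⨅ θ' : Θ, Llim θ') + ε n} :=
    fun n => measurableSet_le hLlimlsc.measurable measurable_const
  set A : ℕ → Set Θ := fun n => {θ : Θ | Llim θ ≤ (⨅ θ' : Θ, Llim θ') + ε n} with hAdef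
  set q : ℕ → ℝ := fun n => (((Qn n) (A n) : ℝ≥0) : ℝ) with hqdef
  have hq1 : ∀ n, q n ≤ 1 := by
    intro n
    exact_mod_cast (Qn n).apply_le_one (A n)
  have hqc : ∀ n, ((Qn n : Measure Θ) (A n)ᶜ).toReal = 1 - q n := by
    intro n
    have h1 : (Qn n : Measure Θ) (A n)ᶜ = 1 - (Qn n : Measure Θ) (A n) :=
      prob_compl_eq_one_sub (hAmeas n)
    have h2 : (Qn n : Measure Θ) (A n) ≤ 1 := prob_le_one
    rw [h1, ENNReal.toReal_sub_of_le h2 ENNReal.one_ne_top, ENNReal.toReal_one]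
    congr 1
  have key : ∀ n, N ≤ n → 1 ≤ n → 1 - q n ≤ (M / β / k) / ((n : ℝ) * ε n) := by
    intro n hN hn1
    obtain ⟨b, hb⟩ := hbdd n
    have hbdd' : BddBelow (Set.range (L n)) := ⟨b, by rintro x ⟨θ, rfl⟩; exact hb θ⟩
    set c := k * ε n with hc
    have hcpos : 0 < c := mul_pos hk (hεpos n)
    set g : Θ → ℝ := fun θ => (⨅ θ', L n θ') + Set.indicator (A n)ᶜ (fun _ => c) θ with hgdef
    have hgint : Integrable g (Qn n : Measure Θ) :=
      (integrable_const _).add ((integrable_const c).indicator (hAmeas n).compl)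
    have hgle : ∀ θ, g θ ≤ L n θ := by
      intro θ
      by_cases hθ : θ ∈ (A n)ᶜ
      · have h1 : (⨅ θ' : ((A n)ᶜ : Set Θ), L n θ') ≤ L n θ :=
          ciInf_le ⟨b, by rintro x ⟨θ', rfl⟩; exact hb θ'⟩ (⟨θ, hθ⟩ : ((A n)ᶜ : Set Θ))
        have h2 := hgapN n hN
        have h3 : g θ = (⨅ θ', L n θ') + c := by
          rw [hgdef]; simp [Set.indicator_of_mem hθ]
        rw [h3, hc]
        linarith
      · have h3 : g θ = (⨅ θ', L n θ') := by
          rw [hgdef]; simp [Set.indicator_of_notMem hθ]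
        rw [h3]
        exact ciInf_le hbdd' θ
    have hgι : ∫ θ, g θ ∂(Qn n : Measure Θ) = (⨅ θ', L n θ') + c * (1 - q n) := by
      rw [hgdef]
      rw [integral_add (integrable_const _) ((integrable_const c).indicator (hAmeas n).compl),
        integral_const, integral_indicator_const c (hAmeas n).compl]
      simp [measure_univ, hqc n, mul_comm]
      exact Or.inl (hqc n)
    have stepA : (((⨅ θ', L n θ') + c * (1 - q n) : ℝ) : EReal) ≤
        J (L n) (Qn n : Measure Θ) := by
      rw [← hgι]
      exact J_ge_integral (L n) g _ hgint hgle
    have hδkey : ∀ δ : ℝ, 0 < δ →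
        (n : ℝ) * ((⨅ θ', L n θ') + c * (1 - q n)) ≤
          (n : ℝ) * ((⨅ θ', L n θ') + δ) + 1 / β * M := by
      intro δ hδ
      have hinfd := hdirac (L n) ⟨b, hb⟩ (hlsc n) (hcoer n)
      have hlt : (⨅ ν : 𝒬, J (L n) (ν.1 : Measure Θ)) <
          (((⨅ θ', L n θ') + δ : ℝ) : EReal) := by
        rw [hinfd]
        exact_mod_cast (by linarith : (⨅ θ', L n θ') < (⨅ θ', L n θ') + δ)
      obtain ⟨ν, hν⟩ := iInf_lt_iff.1 hlt
      have c1 : (((n : ℝ) * ((⨅ θ', L n θ') + c * (1 - q n)) : ℝ) : EReal) ≤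
          (((n : ℝ) : EReal)) * J (L n) (Qn n : Measure Θ) := by
        rw [EReal.coe_mul]
        exact mul_le_mul_of_nonneg_left stepA (by exact_mod_cast Nat.cast_nonneg (α := ℝ) n)
      have c2 : (((n : ℝ) : EReal)) * J (L n) (Qn n : Measure Θ) ≤
          T n β (L n) D Pr (Qn n) := by
        unfold T
        refine le_add_of_nonneg_right ?_
        exact_mod_cast mul_nonneg (by positivity) (hDnn (Qn n) Pr)
      have c3 := (hQn n).2 ν.1 ν.2
      have c4 : T n β (L n) D Pr ν.1 ≤
          (((n : ℝ) * ((⨅ θ', L n θ') + δ) + 1 / β * M : ℝ) : EReal) := by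
        unfold T
        rw [EReal.coe_add, EReal.coe_mul]
        refine add_le_add ?_ ?_
        · exact mul_le_mul_of_nonneg_left hν.le (by exact_mod_cast Nat.cast_nonneg (α := ℝ) n)
        · exact_mod_cast mul_le_mul_of_nonneg_left (hDbdd ν.1 ν.2) (by positivity)
      exact EReal.coe_le_coe_iff.1 (c1.trans (c2.trans (c3.trans c4)))
    have hnpos : (0 : ℝ) < n := by exact_mod_cast hn1
    have hfin : (n : ℝ) * (c * (1 - q n)) ≤ M / β := by
      refine le_of_forall_pos_le_add ?_
      intro δ hδ
      have h' := hδkey (δ / n) (by positivity)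
      have e : (n : ℝ) * (δ / n) = δ := by field_simp
      rw [mul_add, mul_add, e] at h'
      have hMβ : 1 / β * M = M / β := by ring
      linarith
    have hprod : 0 < (n : ℝ) * ε n := mul_pos hnpos (hεpos n)
    rw [div_div, div_div]
    rw [le_div_iff₀ (mul_pos hβ (mul_pos hk hprod))]
    calc (1 - q n) * (β * (k * ((n : ℝ) * ε n))) = β * ((n : ℝ) * (c * (1 - q n))) := by
          rw [hc]; ring
      _ ≤ β * (M / β) := by nlinarith [hfin]
      _ = M := by field_simp
  have hlow : Tendsto (fun n : ℕ => 1 - (M / β / k) / ((n : ℝ) * ε n)) atTop (nhds 1) := by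
    have h0 : Tendsto (fun n : ℕ => (M / β / k) / ((n : ℝ) * ε n)) atTop (nhds 0) :=
      Tendsto.div_atTop tendsto_const_nhds hnε
    simpa using h0.const_sub (1 : ℝ)
  refine tendsto_of_tendsto_of_tendsto_of_le_of_le' hlow tendsto_const_nhds ?_ ?_
  · filter_upwards [eventually_ge_atTop N, eventually_ge_atTop 1] with n hN h1
    linarith [key n hN h1]
  · exact Eventually.of_forall hq1
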